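/- Let F: R^d × R^2 → R^d satisfy the group representation condition F(v, Δx1 + Δx2) = F(F(v, Δx1), Δx2) and F(v, 0) = v. Suppose v: R^2 → R^d satisfies v(x + Δx) = F(v(x), Δx), and assume F is differentiable in its second argument at 0 with directional derivatives f_θ(v(x)) along direction θ, and that the map w ↦ f_{π/2}(w) is differentiable. Then v(x + δx) = v(x) + f_0(v(x)) δr cos θ + f_{π/2}(v(x)) δr sin θ + o(δr) for δx = (δr cos θ, δr sin θ). -/

import Mathlib

open Asymptotics

section Aux

variable {E : Type*} [NormedAddCommGroup E] [NormedSpace ℝ E]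

lemma flow_deriv (Φ : E → ℝ → E) (X : E → E)
    (hgrp : ∀ p a b, Φ p (a + b) = Φ (Φ p a) b)
    (hd : ∀ p, HasDerivAt (Φ p) (X p) 0) :
    ∀ p σ, HasDerivAt (Φ p) (X (Φ p σ)) σ := by
  intro p σ
  have key : ∀ t, Φ p t = Φ (Φ p σ) (t - σ) := by
    intro t
    rw [← hgrp]
    ring_nf
  have h1 : HasDerivAt (fun t => Φ (Φ p σ) (t - σ)) (X (Φ p σ)) σ := by
    have hshift : HasDerivAt (fun t : ℝ => t - σ) 1 σ := (hasDerivAt_id σ).sub_const σ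
    have := HasDerivAt.scomp_of_eq (x := σ) (hd (Φ p σ)) hshift (by norm_num)
    simpa [Function.comp_def] using this
  exact h1.congr_of_eventuallyEq (Filter.Eventually.of_forall fun t => (key t))

lemma flow_small [ProperSpace E] (Φ : E → ℝ → E) (X : E → E) (hX : Continuous X)
    (hΦ0 : ∀ p, Φ p 0 = p)
    (hder : ∀ p σ, HasDerivAt (Φ p) (X (Φ p σ)) σ)
    (w : E) : ∀ ρ > 0, ∃ δ > 0, ∀ p σ, ‖p - w‖ < δ → |σ| < δ → ‖Φ p σ - w‖ < ρ := by
  intro ρ hρ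
  obtain ⟨C, hC⟩ := (isCompact_closedBall w ρ).exists_bound_of_continuousOn hX.continuousOn
  set M : ℝ := max C 0 with hM
  have hM0 : 0 ≤ M := le_max_right _ _
  have hCM : ∀ y ∈ Metric.closedBall w ρ, ‖X y‖ ≤ M := fun y hy => (hC y hy).trans (le_max_left _ _)
  refine ⟨min (ρ / 2) (ρ / (2 * (M + 1))), by positivity, ?_⟩
  intro p σ hp hσ
  by_contra hcon
  push_neg at hcon
  set g : ℝ → E := fun t => Φ p (t * σ) with hg
  have hgder : ∀ t : ℝ, HasDerivAt g (σ • X (Φ p (t * σ))) t := by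
    intro t
    have := (hder p (t * σ)).scomp t ((hasDerivAt_id t).mul_const σ)
    simpa [hg, Function.comp_def] using this
  have hgcont : Continuous g := by
    apply continuous_iff_continuousAt.2
    exact fun t => (hgder t).continuousAt
  set A : Set ℝ := {t : ℝ | t ∈ Set.Icc (0:ℝ) 1 ∧ ρ ≤ ‖g t - w‖} with hA
  have hA1 : (1:ℝ) ∈ A := by
    constructor
    · exact ⟨zero_le_one, le_refl 1⟩
    · simpa [hg] using hcon
  have hAne : A.Nonempty := ⟨1, hA1⟩
  have hAclosed : IsClosed A := by
    have : A = Set.Icc (0:ℝ) 1 ∩ {t : ℝ | ρ ≤ ‖g t - w‖} := by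
      ext t; simp [hA, Set.mem_setOf_eq, Set.mem_inter_iff]
    rw [this]
    exact isClosed_Icc.inter (isClosed_le continuous_const ((hgcont.sub continuous_const).norm))
  have hAbdd : BddBelow A := ⟨0, fun t ht => ht.1.1⟩
  set t₁ : ℝ := sInf A with ht₁
  have ht₁A : t₁ ∈ A := hAclosed.csInf_mem hAne hAbdd
  have hg0 : g 0 = p := by simp [hg, hΦ0]
  have hpδ : ‖p - w‖ < ρ / 2 := lt_of_lt_of_le hp (min_le_left _ _)
  have h0nA : (0:ℝ) ∉ A := by
    intro h0
    have := h0.2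
    rw [hg0] at this
    linarith
  have ht₁pos : 0 < t₁ := lt_of_le_of_ne ht₁A.1.1 (fun h => h0nA (h ▸ ht₁A))
  have hlt : ∀ t, 0 ≤ t → t < t₁ → ‖g t - w‖ < ρ := by
    intro t ht0 htlt
    by_contra hge
    push_neg at hge
    have htA : t ∈ A := ⟨⟨ht0, htlt.le.trans ht₁A.1.2⟩, hge⟩
    exact absurd (csInf_le hAbdd htA) (not_le.2 htlt)
  have hle : ∀ t ∈ Set.Icc (0:ℝ) t₁, ‖g t - w‖ ≤ ρ := by
    intro t ht
    rcases lt_or_eq_of_le ht.2 with h | h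
    · exact (hlt t ht.1 h).le
    · have htend : Filter.Tendsto (fun s => ‖g s - w‖) (nhdsWithin t₁ (Set.Iio t₁))
          (nhds ‖g t₁ - w‖) :=
        ((hgcont.sub continuous_const).norm.continuousAt).continuousWithinAt
      have hle₁ : ‖g t₁ - w‖ ≤ ρ := by
        refine le_of_tendsto htend ?_
        filter_upwards [Ioo_mem_nhdsLT ht₁pos] with s hs
        exact (hlt s hs.1.le hs.2).le
      rw [h]
      exact hle₁
  have hball : ∀ t ∈ Set.Icc (0:ℝ) t₁, Φ p (t * σ) ∈ Metric.closedBall w ρ := by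
    intro t ht
    rw [Metric.mem_closedBall, dist_eq_norm]
    exact hle t ht
  have hbd : ∀ t ∈ Set.Icc (0:ℝ) t₁, ‖σ • X (Φ p (t * σ))‖ ≤ |σ| * M := by
    intro t ht
    rw [norm_smul, Real.norm_eq_abs]
    exact mul_le_mul_of_nonneg_left (hCM _ (hball t ht)) (abs_nonneg σ)
  have hmvt : ‖g t₁ - g 0‖ ≤ |σ| * M * ‖t₁ - 0‖ :=
    Convex.norm_image_sub_le_of_norm_hasDerivWithin_le
      (fun t ht => (hgder t).hasDerivWithinAt) hbd (convex_Icc 0 t₁)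
      ⟨le_refl 0, ht₁pos.le⟩ ⟨ht₁pos.le, le_refl t₁⟩
  have hσδ : |σ| < ρ / (2 * (M + 1)) := lt_of_lt_of_le hσ (min_le_right _ _)
  have ht₁le1 : t₁ ≤ 1 := ht₁A.1.2
  have hfinal : ‖g t₁ - w‖ < ρ := by
    have h1 : ‖g t₁ - w‖ ≤ ‖g t₁ - g 0‖ + ‖g 0 - w‖ := norm_sub_le_norm_sub_add_norm_sub _ _ _
    have h2 : ‖g t₁ - g 0‖ ≤ |σ| * M := by
      have : |σ| * M * ‖t₁ - 0‖ ≤ |σ| * M * 1 := by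
        apply mul_le_mul_of_nonneg_left _ (by positivity)
        rw [sub_zero, Real.norm_eq_abs, abs_of_nonneg ht₁pos.le]
        exact ht₁le1
      linarith [hmvt]
    have h3 : |σ| * M ≤ ρ / (2 * (M + 1)) * M := mul_le_mul_of_nonneg_right hσδ.le hM0
    have h4 : ρ / (2 * (M + 1)) * M < ρ / 2 := by
      rw [div_mul_eq_mul_div, div_lt_div_iff₀ (by positivity) (by positivity)]
      nlinarith
    rw [hg0] at h1 h2
    linarith
  exact absurd ht₁A.2 (not_le.2 hfinal)

end Aux

theorem stmt14 {d : ℕ}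
    (F : EuclideanSpace ℝ (Fin d) → ℝ × ℝ → EuclideanSpace ℝ (Fin d))
    (hgrp : ∀ w Δ1 Δ2, F w (Δ1 + Δ2) = F (F w Δ1) Δ2)
    (hid : ∀ w, F w 0 = w)
    (v : ℝ × ℝ → EuclideanSpace ℝ (Fin d))
    (hv : ∀ x Δ, v (x + Δ) = F (v x) Δ)
    (f : ℝ → EuclideanSpace ℝ (Fin d) → EuclideanSpace ℝ (Fin d))
    (hf : ∀ θ w, HasDerivAt (fun r : ℝ => F w (r * Real.cos θ, r * Real.sin θ)) (f θ w) 0)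
    (hdiff : Differentiable ℝ (f (Real.pi / 2))) :
    ∀ (x : ℝ × ℝ) (θ : ℝ),
      (fun δr : ℝ => v (x + (δr * Real.cos θ, δr * Real.sin θ)) - v x
          - δr • (Real.cos θ • f 0 (v x) + Real.sin θ • f (Real.pi / 2) (v x)))
        =o[nhds 0] (fun δr : ℝ => δr) := by
  intro x θ
  set w : EuclideanSpace ℝ (Fin d) := v x with hw
  set X : EuclideanSpace ℝ (Fin d) → EuclideanSpace ℝ (Fin d) := f (Real.pi / 2) with hX
  -- vertical flow
  set Φ : EuclideanSpace ℝ (Fin d) → ℝ → EuclideanSpace ℝ (Fin d) := fun p s => F p (0, s) with hΦ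
  have hΦgrp : ∀ p a b, Φ p (a + b) = Φ (Φ p a) b := by
    intro p a b
    simp only [hΦ]
    rw [← hgrp]
    norm_num [Prod.mk_add_mk]
  have hΦ0 : ∀ p, Φ p 0 = p := by
    intro p
    simp only [hΦ]
    rw [show ((0:ℝ), (0:ℝ)) = (0 : ℝ × ℝ) from rfl, hid]
  have h2 : ∀ q, HasDerivAt (fun s : ℝ => F q (0, s)) (X q) 0 := by
    intro q
    have := hf (Real.pi / 2) q
    simpa [Real.cos_pi_div_two, Real.sin_pi_div_two] using this
  have hder : ∀ p σ, HasDerivAt (Φ p) (X (Φ p σ)) σ := flow_deriv Φ X hΦgrp h2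
  have hXcont : Continuous X := hdiff.continuous
  -- horizontal curve
  set u : ℝ → EuclideanSpace ℝ (Fin d) := fun r => F w (r * Real.cos θ, 0) with hu'
  have h1 : HasDerivAt (fun a : ℝ => F w (a, 0)) (f 0 w) 0 := by
    have := hf 0 w
    simpa using this
  have hu : HasDerivAt u (Real.cos θ • f 0 w) 0 := by
    have hmul : HasDerivAt (fun r : ℝ => r * Real.cos θ) (Real.cos θ) 0 := by
      simpa using (hasDerivAt_id (0:ℝ)).mul_const (Real.cos θ)
    have := HasDerivAt.scomp_of_eq (x := (0:ℝ)) h1 hmul (by norm_num)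
    simpa [hu', Function.comp_def] using this
  have hu0 : u 0 = w := by
    simp only [hu', zero_mul]
    rw [show ((0:ℝ), (0:ℝ)) = (0 : ℝ × ℝ) from rfl, hid]
  have hutend : Filter.Tendsto u (nhds 0) (nhds w) := by
    have := hu.continuousAt
    rwa [ContinuousAt, hu0] at this
  -- key group decomposition
  have key : ∀ r : ℝ, F w (r * Real.cos θ, r * Real.sin θ) = Φ (u r) (r * Real.sin θ) := by
    intro r
    simp only [hΦ, hu']
    rw [← hgrp]
    norm_num [Prod.mk_add_mk]
  -- the three pieces
  have hT1 : (fun r : ℝ => u r - w - r • (Real.cos θ • f 0 w)) =o[nhds 0] (fun r : ℝ => r) := by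
    have := hu.isLittleO
    simpa [hu0] using this
  have hT3 : (fun r : ℝ => (r * Real.sin θ) • (X (u r) - X w)) =o[nhds 0] (fun r : ℝ => r) := by
    have htend : Filter.Tendsto (fun r : ℝ => Real.sin θ • (X (u r) - X w)) (nhds 0) (nhds 0) := by
      have : Filter.Tendsto (fun r : ℝ => X (u r) - X w) (nhds 0) (nhds (X w - X w)) :=
        ((hXcont.continuousAt.tendsto.comp hutend)).sub tendsto_const_nhds
      rw [sub_self] at this
      simpa using this.const_smul (Real.sin θ)
    have ho : (fun r : ℝ => Real.sin θ • (X (u r) - X w)) =o[nhds 0] (fun _ : ℝ => (1:ℝ)) :=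
      (isLittleO_one_iff ℝ).2 htend
    have := (isBigO_refl (fun r : ℝ => r) (nhds 0)).smul_isLittleO ho
    refine this.congr' ?_ ?_
    · filter_upwards with r
      module
    · filter_upwards with r
      simp
  have hT2 : (fun r : ℝ => Φ (u r) (r * Real.sin θ) - u r - (r * Real.sin θ) • X (u r))
      =o[nhds 0] (fun r : ℝ => r) := by
    rw [isLittleO_iff]
    intro ε hε
    set ε' : ℝ := ε / (|Real.sin θ| + 1) with hε'
    have hε'pos : 0 < ε' := by positivity
    -- continuity of X at w
    obtain ⟨ρ, hρpos, hρ⟩ : ∃ ρ > 0, ∀ y : EuclideanSpace ℝ (Fin d), ‖y - w‖ < ρ → ‖X y - X w‖ < ε' / 2 := by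
      have hca : ContinuousAt X w := hXcont.continuousAt
      obtain ⟨ρ, hρpos, hρ⟩ := Metric.continuousAt_iff.1 hca (ε' / 2) (by positivity)
      refine ⟨ρ, hρpos, fun y hy => ?_⟩
      have hd1 : dist y w < ρ := by rwa [dist_eq_norm]
      have := hρ hd1
      rwa [dist_eq_norm] at this
    obtain ⟨δ, hδpos, hδ⟩ := flow_small Φ X hXcont hΦ0 hder w ρ hρpos
    set η : ℝ := min δ ρ with hη
    have hηpos : 0 < η := lt_min hδpos hρpos
    have e1 : ∀ᶠ r : ℝ in nhds 0, ‖u r - w‖ < η := by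
      have := hutend (Metric.ball_mem_nhds w hηpos)
      filter_upwards [this] with r hr
      rwa [Set.mem_preimage, Metric.mem_ball, dist_eq_norm] at hr
    have e2 : ∀ᶠ r : ℝ in nhds 0, |r * Real.sin θ| < η := by
      have : Filter.Tendsto (fun r : ℝ => r * Real.sin θ) (nhds 0) (nhds 0) := by
        simpa using (show Continuous (fun r : ℝ => r * Real.sin θ) from continuous_id.mul continuous_const).tendsto (0:ℝ)
      have := this (Metric.ball_mem_nhds (0:ℝ) hηpos)
      filter_upwards [this] with r hr
      rwa [Set.mem_preimage, Metric.mem_ball, Real.dist_eq, sub_zero] at hr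
    filter_upwards [e1, e2] with r h1r h2r
    set p : EuclideanSpace ℝ (Fin d) := u r with hp
    set s : ℝ := r * Real.sin θ with hs
    set c : ℝ → EuclideanSpace ℝ (Fin d) := fun t => Φ p (t * s) - (t * s) • X p with hc
    have hcder : ∀ t : ℝ, HasDerivAt c (s • X (Φ p (t * s)) - s • X p) t := by
      intro t
      have hpart1 : HasDerivAt (fun t : ℝ => Φ p (t * s)) (s • X (Φ p (t * s))) t := by
        have := (hder p (t * s)).scomp t ((hasDerivAt_id t).mul_const s)
        simpa [Function.comp_def] using this
      have hpart2 : HasDerivAt (fun t : ℝ => (t * s) • X p) (s • X p) t := by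
        simpa using ((hasDerivAt_id t).mul_const s).smul_const (X p)
      exact hpart1.sub hpart2
    have hbound : ∀ t ∈ Set.Icc (0:ℝ) 1, ‖s • X (Φ p (t * s)) - s • X p‖ ≤ |s| * ε' := by
      intro t ht
      rw [← smul_sub, norm_smul, Real.norm_eq_abs]
      apply mul_le_mul_of_nonneg_left _ (abs_nonneg s)
      have hflow : ‖Φ p (t * s) - w‖ < ρ := by
        apply hδ p (t * s) (lt_of_lt_of_le h1r (min_le_left _ _))
        have : |t * s| ≤ |s| := by
          rw [abs_mul]
          calc |t| * |s| ≤ 1 * |s| := by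
                apply mul_le_mul_of_nonneg_right _ (abs_nonneg s)
                rw [abs_of_nonneg ht.1]; exact ht.2
            _ = |s| := one_mul _
        exact lt_of_le_of_lt this (lt_of_lt_of_le h2r (min_le_left _ _))
      have hA : ‖X (Φ p (t * s)) - X w‖ < ε' / 2 := hρ _ hflow
      have hB : ‖X p - X w‖ < ε' / 2 := hρ _ (lt_of_lt_of_le h1r (min_le_right _ _))
      calc ‖X (Φ p (t * s)) - X p‖ ≤ ‖X (Φ p (t * s)) - X w‖ + ‖X w - X p‖ :=
            norm_sub_le_norm_sub_add_norm_sub _ _ _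
        _ ≤ ε' / 2 + ε' / 2 := by
            rw [norm_sub_rev (X w)]
            exact add_le_add hA.le hB.le
        _ = ε' := by ring
    have hmvt : ‖c 1 - c 0‖ ≤ |s| * ε' * ‖(1:ℝ) - 0‖ :=
      Convex.norm_image_sub_le_of_norm_hasDerivWithin_le
        (fun t _ => (hcder t).hasDerivWithinAt) hbound (convex_Icc 0 1)
        (Set.mem_Icc.2 ⟨le_refl 0, zero_le_one⟩) (Set.mem_Icc.2 ⟨zero_le_one, le_refl 1⟩)
    have hc1 : c 1 = Φ p s - s • X p := by simp [hc]
    have hc0 : c 0 = p := by simp [hc, hΦ0]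
    have hgoal : ‖Φ p s - p - s • X p‖ ≤ |s| * ε' := by
      have : c 1 - c 0 = Φ p s - p - s • X p := by
        rw [hc1, hc0]; abel
      rw [← this]
      simpa using hmvt
    calc ‖Φ (u r) (r * Real.sin θ) - u r - (r * Real.sin θ) • X (u r)‖
        = ‖Φ p s - p - s • X p‖ := rfl
      _ ≤ |s| * ε' := hgoal
      _ ≤ ε * ‖r‖ := by
          have habs : |s| = |r| * |Real.sin θ| := by rw [hs, abs_mul]
          have hkey : ε' * (|Real.sin θ| + 1) = ε := by
            rw [hε']
            field_simp
          calc |s| * ε' = |r| * (|Real.sin θ| * ε') := by rw [habs]; ring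
            _ ≤ |r| * ((|Real.sin θ| + 1) * ε') := by
                apply mul_le_mul_of_nonneg_left _ (abs_nonneg r)
                apply mul_le_mul_of_nonneg_right _ hε'pos.le
                linarith [abs_nonneg (Real.sin θ)]
            _ = |r| * (ε' * (|Real.sin θ| + 1)) := by ring
            _ = |r| * ε := by rw [hkey]
            _ = ε * ‖r‖ := by rw [Real.norm_eq_abs]; ring
  -- assemble
  have hsum := (hT1.add hT2).add hT3
  refine hsum.congr' ?_ ?_
  · filter_upwards with r
    rw [hv x]
    rw [key r]
    simp only [smul_add, smul_smul, smul_sub]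
    module
  · filter_upwards with r
    rfl
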